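/- Let d ≥ 2, let θ : (0,∞) → [0,∞) be nondecreasing and locally integrable against ds/s, define θ̂(r) := (1/log²2) ∫_r^{2r} (1/t) ∫_t^{2t} θ(s)/s ds dt, and define Ψ : ℝ^d → ℝ^d by Ψ(X) := X + 3|X| θ̂(|X|) e_d for X ≠ 0 and Ψ(0) := 0. Let r > 0 satisfy θ(4r) < 1/26. Then Ψ maps the sphere ∂B_ρ(0) onto the sphere ∂B_ρ(3ρθ̂(ρ) e_d) for each 0 < ρ ≤ r, the image of the open ball satisfies Ψ(B_r(0)) = B_r(3rθ̂(r) e_d), and consequently ∂(Ψ(B_r(0))) = Ψ(∂B_r(0)). -/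

import Mathlib

open MeasureTheory Set Filter Metric intervalIntegral

noncomputable section

/-- The smoothed Dini parameter `θ̂(r) = (1/log² 2) ∫_r^{2r} (1/t) ∫_t^{2t} θ(s)/s ds dt`. -/
def smoothedTheta (θ : ℝ → ℝ) (r : ℝ) : ℝ :=
  (1 / (Real.log 2) ^ 2) * ∫ t in r..(2 * r), (1 / t) * ∫ s in t..(2 * t), θ s / s

/-- The vertical perturbation map `Ψ(X) = X + 3|X|θ̂(|X|) e_d` (with `Ψ(0) = 0`). -/
def vertPerturb (d : ℕ) (hd : 2 ≤ d) (θ : ℝ → ℝ) (X : EuclideanSpace ℝ (Fin d)) :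
    EuclideanSpace ℝ (Fin d) :=
  X + (3 * ‖X‖ * smoothedTheta θ ‖X‖) •
    EuclideanSpace.single (⟨d - 1, by omega⟩ : Fin d) (1:ℝ)


/-- Abstract geometric lemma: a radial vertical-shift map with a monotone, contractive shift
profile maps spheres to spheres and balls to balls. -/
theorem radialShift_maps
    {E : Type*} [NormedAddCommGroup E] [NormedSpace ℝ E]
    (e : E) (he : ‖e‖ = 1) (c : ℝ → ℝ) (hc0 : c 0 = 0)
    (r : ℝ) (hr : 0 < r)
    (hmono : ∀ x y : ℝ, 0 ≤ x → x ≤ y → y ≤ r → c x ≤ c y)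
    (hlip : ∀ x y : ℝ, 0 ≤ x → x ≤ y → y ≤ r → c y - c x ≤ (1/2) * (y - x)) :
    (∀ ρ : ℝ, 0 < ρ →
      (fun X => X + c ‖X‖ • e) '' sphere 0 ρ = sphere (c ρ • e) ρ) ∧
    (fun X => X + c ‖X‖ • e) '' ball 0 r = ball (c r • e) r := by
  have hccont : ContinuousOn c (Icc 0 r) := by
    have : LipschitzOnWith 1 c (Icc 0 r) := by
      rw [lipschitzOnWith_iff_dist_le_mul]
      intro x hx y hy
      simp only [NNReal.coe_one, one_mul, Real.dist_eq]
      rcases le_total x y with h | h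
      · have h1 := hmono x y hx.1 h hy.2
        have h2 := hlip x y hx.1 h hy.2
        rw [abs_sub_comm (c x) (c y), abs_sub_comm x y,
          abs_of_nonneg (by linarith : (0:ℝ) ≤ c y - c x),
          abs_of_nonneg (by linarith : (0:ℝ) ≤ y - x)]
        linarith
      · have h1 := hmono y x hy.1 h hx.2
        have h2 := hlip y x hy.1 h hx.2
        rw [abs_of_nonneg (by linarith : (0:ℝ) ≤ c x - c y),
          abs_of_nonneg (by linarith : (0:ℝ) ≤ x - y)]
        linarith
    exact this.continuousOn
  constructor
  · intro ρ hρ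
    ext Y
    simp only [mem_image]
    constructor
    · rintro ⟨X, hX, rfl⟩
      rw [mem_sphere_zero_iff_norm] at hX
      rw [mem_sphere_iff_norm, hX, add_sub_cancel_right, hX]
    · intro hY
      rw [mem_sphere_iff_norm] at hY
      refine ⟨Y - c ρ • e, ?_, ?_⟩
      · rw [mem_sphere_zero_iff_norm, hY]
      · rw [hY, sub_add_cancel]
  · ext Y
    simp only [mem_image]
    constructor
    · rintro ⟨X, hX, rfl⟩
      rw [mem_ball_zero_iff] at hX
      have hXnn : (0:ℝ) ≤ ‖X‖ := norm_nonneg X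
      have h1 := hmono ‖X‖ r hXnn hX.le le_rfl
      have h2 := hlip ‖X‖ r hXnn hX.le le_rfl
      rw [mem_ball_iff_norm]
      have key : X + c ‖X‖ • e - c r • e = X + (c ‖X‖ - c r) • e := by
        rw [sub_smul]; abel
      rw [key]
      calc ‖X + (c ‖X‖ - c r) • e‖ ≤ ‖X‖ + ‖(c ‖X‖ - c r) • e‖ := norm_add_le _ _
        _ = ‖X‖ + |c ‖X‖ - c r| := by rw [norm_smul, he, Real.norm_eq_abs, mul_one]
        _ = ‖X‖ + (c r - c ‖X‖) := by rw [abs_sub_comm, abs_of_nonneg (by linarith)]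
        _ < r := by linarith
    · intro hY
      rw [mem_ball_iff_norm] at hY
      have hcont : ContinuousOn (fun ρ => ‖Y - c ρ • e‖ - ρ) (Icc 0 r) :=
        ((continuousOn_const.sub (hccont.smul continuousOn_const)).norm).sub
          continuousOn_id
      have h0 : (0:ℝ) ∈ Icc (‖Y - c r • e‖ - r) (‖Y - c 0 • e‖ - 0) := by
        constructor
        · linarith
        · rw [hc0, zero_smul, sub_zero, sub_zero]
          exact norm_nonneg Y
      obtain ⟨ρ, hρmem, hρeq⟩ := intermediate_value_Icc' hr.le hcont h0
      have hXn : ‖Y - c ρ • e‖ = ρ := by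
        have := hρeq; dsimp at this; linarith
      have hρr : ρ < r := by
        rcases lt_or_eq_of_le hρmem.2 with h | h
        · exact h
        · exfalso; rw [h] at hXn; rw [hXn] at hY; exact lt_irrefl _ hY
      refine ⟨Y - c ρ • e, ?_, ?_⟩
      · rw [mem_ball_zero_iff, hXn]; exact hρr
      · rw [hXn, sub_add_cancel]



namespace VPaux

/-- inner integral -/
def g (θ : ℝ → ℝ) (t : ℝ) : ℝ := ∫ s in t..(2*t), θ s / s

lemma div_eq_comp (f : ℝ → ℝ) {a : ℝ} (ha : a ≠ 0) :
    (fun v : ℝ => f (a*v) / v) = fun v => f (a*v) / (a*v) * a := by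
  funext v
  rcases eq_or_ne v 0 with h | h
  · simp [h]
  · field_simp

lemma sub1 (f : ℝ → ℝ) {a : ℝ} (ha : 0 < a) :
    (∫ s in a..(2*a), f s / s) = ∫ v in (1:ℝ)..2, f (a*v) / v := by
  have h := intervalIntegral.smul_integral_comp_mul_left (a := 1) (b := 2) (fun s => f s / s) a
  rw [smul_eq_mul, mul_comm] at h
  rw [div_eq_comp f ha.ne', intervalIntegral.integral_mul_const, h]
  norm_num [mul_comm]

variable {θ : ℝ → ℝ}
variable (hθnn : ∀ s : ℝ, 0 < s → 0 ≤ θ s)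
variable (hθmono : MonotoneOn θ (Set.Ioi (0:ℝ)))
variable (hθint : ∀ a b : ℝ, 0 < a → IntervalIntegrable (fun s => θ s / s) volume a b)

section
include hθint

lemma intg {t : ℝ} (ht : 0 < t) :
    IntervalIntegrable (fun v => θ (t*v) / v) volume 1 2 := by
  have h := ((hθint t (2*t) ht).comp_mul_left (c := t)).mul_const t
  rw [div_self ht.ne', mul_div_assoc, div_self ht.ne', mul_one] at h
  rw [div_eq_comp θ ht.ne']
  exact h

end

section
include hθnn

lemma g_nonneg {t : ℝ} (ht : 0 < t) : 0 ≤ g θ t := by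
  apply intervalIntegral.integral_nonneg (by linarith)
  intro s hs
  exact div_nonneg (hθnn s (lt_of_lt_of_le ht hs.1)) (le_trans ht.le hs.1)

end

section
include hθnn hθmono hθint

/-- `∫_a^b θ(s)/s ds ≤ θ(b) log(b/a)` -/
lemma int_theta_le {a b : ℝ} (ha : 0 < a) (hab : a ≤ b) :
    (∫ s in a..b, θ s / s) ≤ θ b * Real.log (b/a) := by
  have hb : 0 < b := lt_of_lt_of_le ha hab
  have hint2 : IntervalIntegrable (fun s => θ b * (1/s)) volume a b := by
    apply ContinuousOn.intervalIntegrable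
    apply continuousOn_const.mul
    apply continuousOn_const.div continuousOn_id
    intro x hx
    rw [uIcc_of_le hab] at hx
    exact ne_of_gt (lt_of_lt_of_le ha hx.1)
  have h := intervalIntegral.integral_mono_on hab (hθint a b ha) hint2 ?_
  · rw [intervalIntegral.integral_const_mul, integral_one_div] at h
    · exact h
    · rw [uIcc_of_le hab]
      intro hmem
      exact absurd hmem.1 (not_le.mpr ha)
  · intro s hs
    have hs0 : 0 < s := lt_of_lt_of_le ha hs.1
    rw [mul_one_div]
    gcongr
    exact hθmono (mem_Ioi.mpr hs0) (mem_Ioi.mpr (lt_of_lt_of_le ha hab)) hs.2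

lemma g_le {t : ℝ} (ht : 0 < t) : g θ t ≤ θ (2*t) * Real.log 2 := by
  have h := int_theta_le hθnn hθmono hθint ht (by linarith : t ≤ 2*t)
  have : (2*t)/t = 2 := by field_simp
  rw [this] at h
  exact h

lemma g_mono {x y : ℝ} (hx : 0 < x) (hxy : x ≤ y) : g θ x ≤ g θ y := by
  have hy : 0 < y := lt_of_lt_of_le hx hxy
  rw [g, g, sub1 θ hx, sub1 θ hy]
  apply intervalIntegral.integral_mono_on one_le_two (intg hθint hx) (intg hθint hy)
  intro v hv
  have hv0 : (0:ℝ) < v := lt_of_lt_of_le one_pos hv.1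
  gcongr
  exact hθmono (mem_Ioi.mpr (mul_pos hx hv0)) (mem_Ioi.mpr (mul_pos hy hv0))
    (by nlinarith)

end


lemma hat_eq {ρ : ℝ} (hρ : 0 < ρ) :
    smoothedTheta θ ρ = (1/(Real.log 2)^2) * ∫ u in (1:ℝ)..2, g θ (ρ*u) / u := by
  rw [smoothedTheta]
  congr 1
  rw [← sub1 (g θ) hρ]
  apply intervalIntegral.integral_congr
  intro t _
  show (1/t) * (∫ s in t..(2*t), θ s / s) = g θ t / t
  rw [one_div_mul_eq_div]
  rfl

section
include hθnn hθmono hθint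

lemma intgg {ρ : ℝ} (hρ : 0 < ρ) : IntervalIntegrable (fun u => g θ (ρ*u) / u) volume 1 2 := by
  have hm : MonotoneOn (fun u => g θ (ρ*u)) (uIcc (1:ℝ) 2) := by
    intro x hx y hy hxy
    rw [uIcc_of_le one_le_two] at hx hy
    exact g_mono hθnn hθmono hθint (mul_pos hρ (lt_of_lt_of_le one_pos hx.1))
      (by nlinarith [hx.1])
  have h1 : IntervalIntegrable (fun u => g θ (ρ*u)) volume 1 2 := hm.intervalIntegrable
  have h2 : ContinuousOn (fun u : ℝ => 1/u) (uIcc (1:ℝ) 2) := by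
    apply continuousOn_const.div continuousOn_id
    intro x hx
    rw [uIcc_of_le one_le_two] at hx
    exact ne_of_gt (lt_of_lt_of_le one_pos hx.1)
  have := h1.mul_continuousOn h2
  simpa [mul_one_div, div_eq_mul_inv] using this

lemma hat_nonneg {ρ : ℝ} (hρ : 0 < ρ) : 0 ≤ smoothedTheta θ ρ := by
  rw [hat_eq hρ]
  apply mul_nonneg (by positivity)
  apply intervalIntegral.integral_nonneg one_le_two
  intro u hu
  have hu0 : (0:ℝ) < u := lt_of_lt_of_le one_pos hu.1
  exact div_nonneg (g_nonneg hθnn (mul_pos hρ hu0)) hu0.le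

lemma hat_le {ρ : ℝ} (hρ : 0 < ρ) : smoothedTheta θ ρ ≤ θ (4*ρ) := by
  have hL : (0:ℝ) < Real.log 2 := Real.log_pos one_lt_two
  have h4 : (0:ℝ) < 4*ρ := by linarith
  have key : (∫ u in (1:ℝ)..2, g θ (ρ*u) / u) ≤
      ∫ u in (1:ℝ)..2, (θ (4*ρ) * Real.log 2) * (1/u) := by
    have hint2 : IntervalIntegrable (fun u : ℝ => (θ (4*ρ) * Real.log 2) * (1/u)) volume 1 2 := by
      apply ContinuousOn.intervalIntegrable
      apply continuousOn_const.mul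
      apply continuousOn_const.div continuousOn_id
      intro x hx
      rw [uIcc_of_le one_le_two] at hx
      exact ne_of_gt (lt_of_lt_of_le one_pos hx.1)
    apply intervalIntegral.integral_mono_on one_le_two (intgg hθnn hθmono hθint hρ) hint2
    intro u hu
    have hu0 : (0:ℝ) < u := lt_of_lt_of_le one_pos hu.1
    have hg := g_le hθnn hθmono hθint (mul_pos hρ hu0)
    have hθle : θ (2*(ρ*u)) ≤ θ (4*ρ) := by
      apply hθmono (mem_Ioi.mpr (by positivity)) (mem_Ioi.mpr h4)
      nlinarith [hu.2]
    rw [mul_one_div]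
    gcongr
    calc g θ (ρ*u) ≤ θ (2*(ρ*u)) * Real.log 2 := hg
      _ ≤ θ (4*ρ) * Real.log 2 := by nlinarith
  rw [hat_eq hρ]
  rw [intervalIntegral.integral_const_mul, integral_one_div (by norm_num)] at key
  have : (2:ℝ)/1 = 2 := by norm_num
  rw [this] at key
  calc (1/(Real.log 2)^2) * ∫ u in (1:ℝ)..2, g θ (ρ*u) / u
      ≤ (1/(Real.log 2)^2) * (θ (4*ρ) * Real.log 2 * Real.log 2) := by
        apply mul_le_mul_of_nonneg_left key (by positivity)
    _ = θ (4*ρ) := by field_simp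

/-- `t ↦ t g(t)` is monotone. -/
lemma tg_mono {x y : ℝ} (hx : 0 < x) (hxy : x ≤ y) : x * g θ x ≤ y * g θ y := by
  have hy : 0 < y := lt_of_lt_of_le hx hxy
  rw [g, g, sub1 θ hx, sub1 θ hy, ← intervalIntegral.integral_const_mul,
    ← intervalIntegral.integral_const_mul]
  apply intervalIntegral.integral_mono_on one_le_two
    ((intg hθint hx).const_mul x) ((intg hθint hy).const_mul y)
  intro v hv
  have hv0 : (0:ℝ) < v := lt_of_lt_of_le one_pos hv.1
  have h1 : θ (x*v) ≤ θ (y*v) := hθmono (mem_Ioi.mpr (mul_pos hx hv0))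
    (mem_Ioi.mpr (mul_pos hy hv0)) (by nlinarith)
  have h2 : 0 ≤ θ (x*v) := hθnn _ (mul_pos hx hv0)
  have h3 : 0 ≤ θ (y*v) / v := div_nonneg (le_trans h2 h1) hv0.le
  apply mul_le_mul hxy ?_ (div_nonneg h2 hv0.le) (le_trans hx.le hxy)
  gcongr

/-- difference bound for g on comparable scales -/
lemma g_diff {a b : ℝ} (ha : 0 < a) (hab : a ≤ b) (h2 : b ≤ 2*a) :
    g θ b - g θ a ≤ θ (2*b) * ((b-a)/a) := by
  have hb : 0 < b := lt_of_lt_of_le ha hab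
  have i1 : IntervalIntegrable (fun s => θ s / s) volume a b := hθint a b ha
  have i2 : IntervalIntegrable (fun s => θ s / s) volume b (2*a) := hθint b (2*a) hb
  have i3 : IntervalIntegrable (fun s => θ s / s) volume (2*a) (2*b) := hθint (2*a) (2*b) (by linarith)
  have e1 := intervalIntegral.integral_add_adjacent_intervals i1 i2
  have e2 := intervalIntegral.integral_add_adjacent_intervals i2 i3
  have hsplit : g θ b - g θ a =
      (∫ s in (2*a)..(2*b), θ s / s) - ∫ s in a..b, θ s / s := by
    rw [g, g]
    linarith [e1, e2]
  have h3 : (∫ s in (2*a)..(2*b), θ s / s) ≤ θ (2*b) * Real.log ((2*b)/(2*a)) :=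
    int_theta_le hθnn hθmono hθint (by linarith) (by linarith)
  have h4 : (0:ℝ) ≤ ∫ s in a..b, θ s / s := by
    apply intervalIntegral.integral_nonneg hab
    intro s hs
    exact div_nonneg (hθnn s (lt_of_lt_of_le ha hs.1)) (le_trans ha.le hs.1)
  have h5 : (2*b)/(2*a) = b/a := by
    rw [mul_div_mul_left _ _ (by norm_num : (2:ℝ) ≠ 0)]
  have h6 : Real.log (b/a) ≤ b/a - 1 := Real.log_le_sub_one_of_pos (by positivity)
  have h7 : b/a - 1 = (b-a)/a := by field_simp
  have h8 : 0 ≤ θ (2*b) := hθnn _ (by linarith)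
  calc g θ b - g θ a ≤ θ (2*b) * Real.log ((2*b)/(2*a)) := by linarith
    _ ≤ θ (2*b) * ((b-a)/a) := by
        rw [h5]
        apply mul_le_mul_of_nonneg_left _ h8
        linarith
    _ = θ (2*b) * ((b-a)/a) := rfl

lemma h_eq {ρ : ℝ} (hρ : 0 < ρ) :
    ρ * smoothedTheta θ ρ = (1/(Real.log 2)^2) * ∫ u in (1:ℝ)..2, ρ * (g θ (ρ*u) / u) := by
  rw [hat_eq hρ, intervalIntegral.integral_const_mul]
  ring

lemma h_mono0 {a b : ℝ} (ha : 0 ≤ a) (hab : a ≤ b) :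
    a * smoothedTheta θ a ≤ b * smoothedTheta θ b := by
  rcases ha.lt_or_eq with ha' | ha'
  · have hb : 0 < b := lt_of_lt_of_le ha' hab
    rw [h_eq hθnn hθmono hθint ha', h_eq hθnn hθmono hθint hb]
    have key : (∫ u in (1:ℝ)..2, a * (g θ (a*u) / u)) ≤
        ∫ u in (1:ℝ)..2, b * (g θ (b*u) / u) := by
      apply intervalIntegral.integral_mono_on one_le_two
        ((intgg hθnn hθmono hθint ha').const_mul a)
        ((intgg hθnn hθmono hθint hb).const_mul b)
      intro u hu
      have hu0 : (0:ℝ) < u := lt_of_lt_of_le one_pos hu.1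
      have key := tg_mono hθnn hθmono hθint (mul_pos ha' hu0)
        (by nlinarith : a*u ≤ b*u)
      have h1 : a * g θ (a*u) ≤ b * g θ (b*u) := by nlinarith
      rw [← mul_div_assoc, ← mul_div_assoc]
      exact div_le_div_of_nonneg_right h1 hu0.le |>.trans_eq rfl
    apply mul_le_mul_of_nonneg_left key
    positivity
  · rw [← ha', zero_mul]
    rcases eq_or_lt_of_le hab with hb | hb
    · rw [← hb, ← ha', zero_mul]
    · have hb' : 0 < b := by linarith
      exact mul_nonneg hb'.le (hat_nonneg hθnn hθmono hθint hb')

lemma h_lip {a b : ℝ} (ha : 0 ≤ a) (hab : a ≤ b) (hb : 0 < b) :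
    b * smoothedTheta θ b - a * smoothedTheta θ a ≤ 4 * θ (4*b) * (b - a) := by
  have hθ4 : 0 ≤ θ (4*b) := hθnn _ (by linarith)
  have hba : 0 ≤ b - a := sub_nonneg.mpr hab
  have hhatb : smoothedTheta θ b ≤ θ (4*b) := hat_le hθnn hθmono hθint hb
  rcases ha.lt_or_eq with ha' | ha'
  · rcases le_or_gt b (2*a) with h2 | h2
    · -- main case: a ≤ b ≤ 2a
      set L := Real.log 2 with hLdef
      have hL : (0:ℝ) < L := Real.log_pos one_lt_two
      have hL2 : (0:ℝ) < L^2 := by positivity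
      have l1 : (0.6931471803:ℝ) < L := Real.log_two_gt_d9
      set M := θ (4*b) * (L + 1) * (b - a) with hMdef
      have hM : 0 ≤ M := by positivity
      have key : (∫ u in (1:ℝ)..2, (b * (g θ (b*u) / u) - a * (g θ (a*u) / u))) ≤
          ∫ u in (1:ℝ)..2, M := by
        apply intervalIntegral.integral_mono_on one_le_two
          (((intgg hθnn hθmono hθint hb).const_mul b).sub
            ((intgg hθnn hθmono hθint ha').const_mul a))
          intervalIntegrable_const
        intro u hu
        have hu0 : (0:ℝ) < u := lt_of_lt_of_le one_pos hu.1
        -- bound the numerator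
        have hgub : g θ (b*u) ≤ θ (4*b) * L := by
          have h1 := g_le hθnn hθmono hθint (mul_pos hb hu0)
          have h2 : θ (2*(b*u)) ≤ θ (4*b) := by
            apply hθmono (mem_Ioi.mpr (by positivity)) (mem_Ioi.mpr (by linarith))
            nlinarith [hu.2]
          nlinarith
        have hgdiff : g θ (b*u) - g θ (a*u) ≤ θ (4*b) * ((b-a)/a) := by
          have h1 := g_diff hθnn hθmono hθint (mul_pos ha' hu0)
            (by nlinarith : a*u ≤ b*u) (by nlinarith : b*u ≤ 2*(a*u))
          have h2 : θ (2*(b*u)) ≤ θ (4*b) := by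
            apply hθmono (mem_Ioi.mpr (by positivity)) (mem_Ioi.mpr (by linarith))
            nlinarith [hu.2]
          have h3 : (b*u - a*u)/(a*u) = (b-a)/a := by
            rw [show b*u - a*u = (b-a)*u by ring, mul_div_mul_right _ _ hu0.ne']
          rw [h3] at h1
          have h4 : (0:ℝ) ≤ (b-a)/a := by positivity
          nlinarith
        have hN : b * g θ (b*u) - a * g θ (a*u) ≤ M := by
          have e1 : b * g θ (b*u) - a * g θ (a*u) =
              (b - a) * g θ (b*u) + a * (g θ (b*u) - g θ (a*u)) := by ring
          have e2 : a * (g θ (b*u) - g θ (a*u)) ≤ θ (4*b) * (b-a) := by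
            have := mul_le_mul_of_nonneg_left hgdiff ha'.le
            rwa [show a * (θ (4*b) * ((b-a)/a)) = θ (4*b) * (b-a) by
              field_simp] at this
          have e3 : (b - a) * g θ (b*u) ≤ (b-a) * (θ (4*b) * L) :=
            mul_le_mul_of_nonneg_left hgub hba
          rw [e1, hMdef]
          nlinarith
        have eD : b * (g θ (b*u) / u) - a * (g θ (a*u) / u) =
            (b * g θ (b*u) - a * g θ (a*u)) / u := by ring
        rw [eD]
        rcases le_or_gt (b * g θ (b*u) - a * g θ (a*u)) 0 with hneg | hpos
        · exact le_trans (div_nonpos_iff.mpr (Or.inr ⟨hneg, hu0.le⟩)) hM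
        · exact le_trans (div_le_self hpos.le hu.1) hN
      have eint : (∫ u in (1:ℝ)..2, M) = M := by
        rw [intervalIntegral.integral_const]
        norm_num
      rw [eint] at key
      have hsub : b * smoothedTheta θ b - a * smoothedTheta θ a =
          (1/L^2) * ∫ u in (1:ℝ)..2, (b * (g θ (b*u) / u) - a * (g θ (a*u) / u)) := by
        rw [intervalIntegral.integral_sub
          ((intgg hθnn hθmono hθint hb).const_mul b)
          ((intgg hθnn hθmono hθint ha').const_mul a),
          h_eq hθnn hθmono hθint ha', h_eq hθnn hθmono hθint hb]
        ring
      rw [hsub]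
      have step1 : (1/L^2) * (∫ u in (1:ℝ)..2,
          (b * (g θ (b*u) / u) - a * (g θ (a*u) / u))) ≤ (1/L^2) * M :=
        mul_le_mul_of_nonneg_left key (by positivity)
      have step2 : (1/L^2) * M ≤ 4 * θ (4*b) * (b - a) := by
        rw [one_div_mul_eq_div, div_le_iff₀ hL2, hMdef]
        have key2 : L + 1 ≤ 4 * L^2 := by nlinarith
        nlinarith [mul_le_mul_of_nonneg_left key2 (mul_nonneg hθ4 hba)]
      linarith
    · -- easy case: b > 2a
      have h1 : 0 ≤ a * smoothedTheta θ a := mul_nonneg ha'.le (hat_nonneg hθnn hθmono hθint ha')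
      have h2 : b * smoothedTheta θ b ≤ b * θ (4*b) :=
        mul_le_mul_of_nonneg_left hhatb hb.le
      nlinarith
  · rw [← ha', zero_mul]
    have h2 : b * smoothedTheta θ b ≤ b * θ (4*b) :=
      mul_le_mul_of_nonneg_left hhatb hb.le
    nlinarith

end

end VPaux


/-- if `θ(4r) < 1/26`, then `Ψ` maps the sphere `∂B_ρ(0)` onto the sphere
`∂B_ρ(3ρθ̂(ρ)e_d)` for each `0 < ρ ≤ r`, maps the open ball `B_r(0)` onto
`B_r(3rθ̂(r)e_d)`, and consequently `∂(Ψ(B_r(0))) = Ψ(∂B_r(0))`. -/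
theorem vertPerturb_maps_spheres_and_balls
    (d : ℕ) (hd : 2 ≤ d)
    (θ : ℝ → ℝ)
    (hθnn : ∀ s : ℝ, 0 < s → 0 ≤ θ s)
    (hθmono : MonotoneOn θ (Set.Ioi (0:ℝ)))
    (hθint : ∀ a b : ℝ, 0 < a → IntervalIntegrable (fun s => θ s / s) volume a b)
    (r : ℝ) (hr : 0 < r) (hsmall : θ (4 * r) < 1 / 26) :
    (∀ ρ : ℝ, 0 < ρ → ρ ≤ r →
      vertPerturb d hd θ '' sphere 0 ρ =
        sphere ((3 * ρ * smoothedTheta θ ρ) •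
          EuclideanSpace.single (⟨d - 1, by omega⟩ : Fin d) (1:ℝ)) ρ) ∧
    vertPerturb d hd θ '' ball 0 r =
      ball ((3 * r * smoothedTheta θ r) •
        EuclideanSpace.single (⟨d - 1, by omega⟩ : Fin d) (1:ℝ)) r ∧
    frontier (vertPerturb d hd θ '' ball 0 r) = vertPerturb d hd θ '' sphere 0 r := by
  have he' : ‖(EuclideanSpace.single (⟨d - 1, by omega⟩ : Fin d) (1:ℝ) :
      EuclideanSpace ℝ (Fin d))‖ = 1 := by
    rw [EuclideanSpace.norm_single]; norm_num
  have hc0 : (fun ρ : ℝ => 3 * ρ * smoothedTheta θ ρ) 0 = 0 := by norm_num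
  have hmono : ∀ x y : ℝ, 0 ≤ x → x ≤ y → y ≤ r →
      (fun ρ : ℝ => 3 * ρ * smoothedTheta θ ρ) x ≤ (fun ρ : ℝ => 3 * ρ * smoothedTheta θ ρ) y := by
    intro x y hx hxy _
    have := VPaux.h_mono0 hθnn hθmono hθint hx hxy
    dsimp only
    linarith
  have hlip : ∀ x y : ℝ, 0 ≤ x → x ≤ y → y ≤ r →
      (fun ρ : ℝ => 3 * ρ * smoothedTheta θ ρ) y - (fun ρ : ℝ => 3 * ρ * smoothedTheta θ ρ) x ≤
        (1/2) * (y - x) := by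
    intro x y hx hxy hyr
    dsimp only
    rcases (hx.trans hxy).lt_or_eq with h0 | h0
    · have hl := VPaux.h_lip hθnn hθmono hθint hx hxy h0
      have hba : (0:ℝ) ≤ y - x := sub_nonneg.mpr hxy
      have hm : θ (4*y) ≤ θ (4*r) :=
        hθmono (mem_Ioi.mpr (by linarith)) (mem_Ioi.mpr (by linarith)) (by linarith)
      nlinarith [mul_le_mul_of_nonneg_right hm hba,
        mul_le_mul_of_nonneg_right hsmall.le hba]
    · have hx0 : x = 0 := le_antisymm (by linarith) hx
      rw [hx0, ← h0]
      norm_num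
  obtain ⟨P1, P2⟩ := radialShift_maps
    (EuclideanSpace.single (⟨d - 1, by omega⟩ : Fin d) (1:ℝ)) he'
    (fun ρ : ℝ => 3 * ρ * smoothedTheta θ ρ) hc0 r hr hmono hlip
  refine ⟨fun ρ hρ _ => P1 ρ hρ, P2, ?_⟩
  rw [show vertPerturb d hd θ '' ball 0 r =
      ball ((3 * r * smoothedTheta θ r) •
        (EuclideanSpace.single (⟨d - 1, by omega⟩ : Fin d) (1:ℝ) :
          EuclideanSpace ℝ (Fin d))) r from P2,
    frontier_ball _ hr.ne']
  exact (P1 r hr).symm
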